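/- In the n-mode CCR algebra, for K symmetric and f_1,…,f_m ∈ ℂ^{2n}, define the GKSL-adjoint action L†(X) = -(1/2)Σ_{j=1}^N [C_j,[C_j,X]] with C_j = (1/2)𝔞ᵀK_j𝔞, K_j = K_jᵀ. Then L†(Π_{l=1}^m f_lᵀ𝔞) = -(1/2)Σ_{j=1}^N Σ_{p=1}^m Σ_{i=1}^m Π_{l=1}^m f_lᵀ(JK_j)^{δ_{il}+δ_{pl}}𝔞. In particular, the span of degree-m products of linear forms is invariant under L†. -/
import Mathlib

open Matrix

private lemma comm_ofFn_prod' {A : Type*} [Ring A] (c : A) :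
    ∀ (m : ℕ) (v : Fin m → A),
    c * (List.ofFn v).prod - (List.ofFn v).prod * c
      = ∑ i : Fin m, (List.ofFn fun l => if i = l then c * v l - v l * c else v l).prod := by
  intro m
  induction m with
  | zero => intro v; simp
  | succ m ih =>
    intro v
    rw [List.ofFn_succ, List.prod_cons, Fin.sum_univ_succ]
    have h0 : ((List.ofFn fun l : Fin (m+1) => if (0:Fin (m+1)) = l then c * v l - v l * c else v l)).prod
        = (c * v 0 - v 0 * c) * (List.ofFn fun l : Fin m => v l.succ).prod := by
      rw [List.ofFn_succ, List.prod_cons]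
      have : ∀ l : Fin m, (if (0:Fin (m+1)) = l.succ then c * v l.succ - v l.succ * c else v l.succ) = v l.succ := by
        intro l; rw [if_neg (fun h => (Fin.succ_ne_zero l) h.symm)]
      simp only [eq_self_iff_true, if_true, this]
    have hsucc : ∀ j : Fin m,
        ((List.ofFn fun l : Fin (m+1) => if Fin.succ j = l then c * v l - v l * c else v l)).prod
        = v 0 * (List.ofFn fun l : Fin m => if j = l then c * v l.succ - v l.succ * c else v l.succ).prod := by
      intro j
      rw [List.ofFn_succ, List.prod_cons]
      have h1 : (if Fin.succ j = (0:Fin (m+1)) then c * v 0 - v 0 * c else v 0) = v 0 := by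
        rw [if_neg (Fin.succ_ne_zero j)]
      have h2 : ∀ l : Fin m, (if Fin.succ j = l.succ then c * v l.succ - v l.succ * c else v l.succ)
          = (if j = l then c * v l.succ - v l.succ * c else v l.succ) := by
        intro l; simp [Fin.succ_inj]
      simp only [h1, h2]
    rw [h0]
    simp_rw [hsucc]
    rw [← Finset.mul_sum, ← ih (fun l => v l.succ)]
    noncomm_ring

private lemma ccr_matrix_form' {A : Type*} [Ring A] [Algebra ℂ A] {n : ℕ}
    (a : (Fin n ⊕ Fin n) → A)
    (hccr : ∀ i j : Fin n,
      a (Sum.inl i) * a (Sum.inr j) - a (Sum.inr j) * a (Sum.inl i)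
        = if i = j then 1 else 0)
    (hcomm_ann : ∀ i j : Fin n, a (Sum.inl i) * a (Sum.inl j) = a (Sum.inl j) * a (Sum.inl i))
    (hcomm_cre : ∀ i j : Fin n, a (Sum.inr i) * a (Sum.inr j) = a (Sum.inr j) * a (Sum.inr i))
    (k s : Fin n ⊕ Fin n) :
    a k * a s = a s * a k
      + ((Matrix.fromBlocks 0 (-1) 1 0 : Matrix (Fin n ⊕ Fin n) (Fin n ⊕ Fin n) ℂ) s k) • (1 : A) := by
  rcases k with i | i <;> rcases s with j | j
  · simp [hcomm_ann i j]
  · have := hccr i j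
    rw [Matrix.fromBlocks_apply₂₁, Matrix.one_apply]
    have h1 : a (Sum.inl i) * a (Sum.inr j) = a (Sum.inr j) * a (Sum.inl i) + (if i = j then 1 else 0) := by
      rw [← this]; abel
    rw [h1]
    congr 1
    by_cases h : i = j <;> simp [h, eq_comm]
  · have := hccr j i
    rw [Matrix.fromBlocks_apply₁₂, Matrix.neg_apply, Matrix.one_apply]
    have h1 : a (Sum.inr i) * a (Sum.inl j) = a (Sum.inl j) * a (Sum.inr i) - (if j = i then 1 else 0) := by
      rw [← this]; abel
    rw [h1]
    by_cases h : j = i <;> simp [h, eq_comm, sub_eq_add_neg]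
  · simp [hcomm_cre i j]

private lemma quad_lin' {A : Type*} [Ring A] [Algebra ℂ A] {n : ℕ}
    (a : (Fin n ⊕ Fin n) → A)
    (hc : ∀ k s, a k * a s = a s * a k
      + ((Matrix.fromBlocks 0 (-1) 1 0 : Matrix (Fin n ⊕ Fin n) (Fin n ⊕ Fin n) ℂ) s k) • (1 : A))
    (k l s : Fin n ⊕ Fin n) :
    a k * a l * a s - a s * (a k * a l)
      = ((Matrix.fromBlocks 0 (-1) 1 0 : Matrix (Fin n ⊕ Fin n) (Fin n ⊕ Fin n) ℂ) s k) • a l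
      + ((Matrix.fromBlocks 0 (-1) 1 0 : Matrix (Fin n ⊕ Fin n) (Fin n ⊕ Fin n) ℂ) s l) • a k := by
  set J : Matrix (Fin n ⊕ Fin n) (Fin n ⊕ Fin n) ℂ := Matrix.fromBlocks 0 (-1) 1 0 with hJ
  have h1 : a k * a l * a s = a k * (a s * a l) + J s l • a k := by
    rw [mul_assoc, hc l s, mul_add, mul_smul_comm, mul_one]
  have h2 : a k * (a s * a l) = a s * (a k * a l) + J s k • a l := by
    rw [← mul_assoc, hc k s, add_mul, smul_mul_assoc, one_mul, mul_assoc]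
  rw [h1, h2]; abel

private lemma commC' {A : Type*} [Ring A] [Algebra ℂ A] {n : ℕ}
    (a : (Fin n ⊕ Fin n) → A)
    (hq : ∀ k l s, a k * a l * a s - a s * (a k * a l)
      = ((Matrix.fromBlocks 0 (-1) 1 0 : Matrix (Fin n ⊕ Fin n) (Fin n ⊕ Fin n) ℂ) s k) • a l
      + ((Matrix.fromBlocks 0 (-1) 1 0 : Matrix (Fin n ⊕ Fin n) (Fin n ⊕ Fin n) ℂ) s l) • a k)
    (K : Matrix (Fin n ⊕ Fin n) (Fin n ⊕ Fin n) ℂ) (hK : Kᵀ = K)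
    (g : (Fin n ⊕ Fin n) → ℂ) :
    ((1/2:ℂ) • ∑ k, ∑ l, K k l • (a k * a l)) * (∑ s, g s • a s)
      - (∑ s, g s • a s) * ((1/2:ℂ) • ∑ k, ∑ l, K k l • (a k * a l))
      = ∑ t, (g ᵥ* ((Matrix.fromBlocks 0 (-1) 1 0 : Matrix (Fin n ⊕ Fin n) (Fin n ⊕ Fin n) ℂ) * K)) t • a t := by
  set J : Matrix (Fin n ⊕ Fin n) (Fin n ⊕ Fin n) ℂ := Matrix.fromBlocks 0 (-1) 1 0 with hJ
  set S : A := ∑ k, ∑ l, K k l • (a k * a l) with hS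
  set G : A := ∑ s, g s • a s with hG
  have hSG : S * G = ∑ k, ∑ l, ∑ s, (K k l * g s) • (a k * a l * a s) := by
    rw [hS, hG, Finset.sum_mul]
    refine Finset.sum_congr rfl fun k _ => ?_
    rw [Finset.sum_mul]
    refine Finset.sum_congr rfl fun l _ => ?_
    rw [smul_mul_assoc, Finset.mul_sum, Finset.smul_sum]
    exact Finset.sum_congr rfl fun s _ => by rw [mul_smul_comm, smul_smul]
  have hGS : G * S = ∑ k, ∑ l, ∑ s, (K k l * g s) • (a s * (a k * a l)) := by
    rw [hS, hG, Finset.sum_mul]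
    have h1 : ∀ s, (g s • a s) * (∑ k, ∑ l, K k l • (a k * a l))
        = ∑ k, ∑ l, (K k l * g s) • (a s * (a k * a l)) := by
      intro s
      rw [smul_mul_assoc, Finset.mul_sum, Finset.smul_sum]
      refine Finset.sum_congr rfl fun k _ => ?_
      rw [Finset.mul_sum, Finset.smul_sum]
      refine Finset.sum_congr rfl fun l _ => ?_
      rw [mul_smul_comm, smul_smul, mul_comm (g s)]
    simp_rw [h1]
    rw [Finset.sum_comm]
    exact Finset.sum_congr rfl fun k _ => Finset.sum_comm ..
  have key : S * G - G * S = (2:ℂ) • ∑ t, (g ᵥ* (J * K)) t • a t := by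
    rw [hSG, hGS]
    simp only [← Finset.sum_sub_distrib, ← smul_sub]
    simp_rw [hq]
    simp only [smul_add, smul_smul, Finset.sum_add_distrib]
    have part1 : (∑ k, ∑ l, ∑ s, (K k l * g s * J s k) • a l)
        = ∑ t, (g ᵥ* (J * K)) t • a t := by
      rw [Finset.sum_comm]
      refine Finset.sum_congr rfl fun l _ => ?_
      simp only [← Finset.sum_smul]
      congr 1
      simp only [Matrix.vecMul, dotProduct, Matrix.mul_apply, Finset.mul_sum]
      rw [Finset.sum_comm]
      refine Finset.sum_congr rfl fun s _ => Finset.sum_congr rfl fun k _ => by ring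
    have part2 : (∑ k, ∑ l, ∑ s, (K k l * g s * J s l) • a k)
        = ∑ t, (g ᵥ* (J * K)) t • a t := by
      refine Finset.sum_congr rfl fun k _ => ?_
      simp only [← Finset.sum_smul]
      congr 1
      simp only [Matrix.vecMul, dotProduct, Matrix.mul_apply, Finset.mul_sum]
      rw [Finset.sum_comm]
      refine Finset.sum_congr rfl fun s _ => Finset.sum_congr rfl fun l _ => ?_
      have : K k l = K l k := by conv_lhs => rw [← hK, Matrix.transpose_apply]
      rw [this]; ring
    rw [part1, part2, two_smul]
  rw [smul_mul_assoc, mul_smul_comm, ← smul_sub, key, smul_smul]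
  norm_num

/-- Action of the GKSL-adjoint generator on a product of linear forms:
`L†(Π_l f_lᵀ𝔞) = -(1/2)Σ_j Σ_p Σ_i Π_l f_lᵀ(JK_j)^{δ_{il}+δ_{pl}}𝔞`. -/
theorem gksl_adjoint_on_products_of_linear_forms
    {A : Type*} [Ring A] [Algebra ℂ A] (n m N : ℕ)
    (a : (Fin n ⊕ Fin n) → A)
    (hccr : ∀ i j : Fin n,
      a (Sum.inl i) * a (Sum.inr j) - a (Sum.inr j) * a (Sum.inl i)
        = if i = j then 1 else 0)
    (hcomm_ann : ∀ i j : Fin n, a (Sum.inl i) * a (Sum.inl j) = a (Sum.inl j) * a (Sum.inl i))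
    (hcomm_cre : ∀ i j : Fin n, a (Sum.inr i) * a (Sum.inr j) = a (Sum.inr j) * a (Sum.inr i))
    (K : Fin N → Matrix (Fin n ⊕ Fin n) (Fin n ⊕ Fin n) ℂ) (hK : ∀ j, (K j)ᵀ = K j)
    (f : Fin m → (Fin n ⊕ Fin n) → ℂ) :
    let J : Matrix (Fin n ⊕ Fin n) (Fin n ⊕ Fin n) ℂ := Matrix.fromBlocks 0 (-1) 1 0
    let lf : ((Fin n ⊕ Fin n) → ℂ) → A := fun g => ∑ k, g k • a k
    let C : Fin N → A := fun j => (1/2 : ℂ) • ∑ k, ∑ l, K j k l • (a k * a l)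
    let Ldag : A → A := fun X =>
      (-(1/2 : ℂ)) • ∑ j, (C j * (C j * X - X * C j) - (C j * X - X * C j) * C j)
    Ldag ((List.ofFn fun l : Fin m => lf (f l)).prod)
      = (-(1/2 : ℂ)) • ∑ j : Fin N, ∑ p : Fin m, ∑ i : Fin m,
          (List.ofFn fun l : Fin m =>
            lf (Matrix.vecMul (f l)
              ((J * K j) ^ ((if i = l then 1 else 0) + (if p = l then 1 else 0))))).prod := by
  intro J lf C Ldag
  have hc := ccr_matrix_form' a hccr hcomm_ann hcomm_cre
  have hq := quad_lin' a hc
  -- bracket of C j with a linear form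
  have hB : ∀ (j : Fin N) (g : (Fin n ⊕ Fin n) → ℂ),
      C j * lf g - lf g * C j = lf (g ᵥ* (J * K j)) :=
    fun j g => commC' a hq (K j) (hK j) g
  -- bracket of C j with a product of linear forms
  have hstep : ∀ (j : Fin N) (g : Fin m → (Fin n ⊕ Fin n) → ℂ),
      C j * (List.ofFn fun l => lf (g l)).prod - (List.ofFn fun l => lf (g l)).prod * C j
        = ∑ i : Fin m, (List.ofFn fun l =>
            lf (if i = l then (g l) ᵥ* (J * K j) else g l)).prod := by
    intro j g
    rw [comm_ofFn_prod' (C j) m (fun l => lf (g l))]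
    refine Finset.sum_congr rfl fun i _ => ?_
    have he : (fun l => if i = l then C j * lf (g l) - lf (g l) * C j else lf (g l))
        = fun l => lf (if i = l then (g l) ᵥ* (J * K j) else g l) := by
      funext l
      by_cases h : i = l <;> simp [h, hB j (g l)]
    rw [he]
  show (-(1/2 : ℂ)) • ∑ j, _ = _
  congr 1
  refine Finset.sum_congr rfl fun j _ => ?_
  -- first bracket
  rw [hstep j f]
  -- second bracket
  rw [Finset.mul_sum, Finset.sum_mul, ← Finset.sum_sub_distrib]
  refine Finset.sum_congr rfl fun p _ => ?_
  rw [hstep j (fun l => if p = l then (f l) ᵥ* (J * K j) else f l)]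
  refine Finset.sum_congr rfl fun i _ => ?_
  have he : (fun l => lf (if i = l then
        (if p = l then (f l) ᵥ* (J * K j) else f l) ᵥ* (J * K j)
        else if p = l then (f l) ᵥ* (J * K j) else f l))
      = fun l => lf ((f l) ᵥ* (J * K j) ^ ((if i = l then 1 else 0) + if p = l then 1 else 0)) := by
    funext l
    congr 1
    by_cases hi : i = l <;> by_cases hp : p = l <;>
      simp [hi, hp, Matrix.vecMul_vecMul, pow_succ, pow_zero, pow_one, Matrix.vecMul_one]
  rw [he]
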